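/- Let v be an admitted vector and define a_i = i + Σ_{p<i} v_{pi} − Σ_{i<p} v_{ip} for 1 ≤ i ≤ n. Then for all 1 ≤ i < j ≤ n: a_j − a_i = j − i + n·v_{ij} − Σ_{i<p<j} δ_{ipj}(v) + Σ_{p<i} δ_{pij}(v) + Σ_{j<p} δ_{ijp}(v); consequently a_j − a_i = n·v_{ij} + r with r ∈ {1,...,n−1}, so ⌊(a_j − a_i)/n⌋ = v_{ij} and a_1 < a_2 < ... < a_n. -/

import Mathlib

/-- A vector `v ∈ ℕ^T` (nonnegative on `T = {(i,j) : 1 ≤ i < j ≤ n}`) is admitted. -/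
def IsAdmitted (n : ℕ) (v : ℕ → ℕ → ℤ) : Prop :=
  (∀ i j, 1 ≤ i → i < j → j ≤ n → 0 ≤ v i j) ∧
  (∀ i, 1 ≤ i → i + 1 ≤ n → v i (i + 1) = 0) ∧
  (∀ i j k, 1 ≤ i → i < j → j < k → k ≤ n →
    v i j + v j k ≤ v i k ∧ v i k ≤ v i j + v j k + 1)

/-- `δ_{ijk}(v) = v_{ik} − v_{ij} − v_{jk}`. -/
def dlt (v : ℕ → ℕ → ℤ) (i j k : ℕ) : ℤ := v i k - v i j - v j k

/-- The window entries `a_i = i + Σ_{p<i} v_{pi} − Σ_{i<p} v_{ip}`. -/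
def winF (n : ℕ) (v : ℕ → ℕ → ℤ) (i : ℕ) : ℤ :=
  (i : ℤ) + ∑ p ∈ Finset.Ico 1 i, v p i - ∑ p ∈ Finset.Ioc i n, v i p

theorem window_difference_formula (n : ℕ) (v : ℕ → ℕ → ℤ) (hv : IsAdmitted n v) :
    ∀ i j, 1 ≤ i → i < j → j ≤ n →
      (winF n v j - winF n v i
          = (j : ℤ) - (i : ℤ) + (n : ℤ) * v i j
            - (∑ p ∈ Finset.Ioo i j, dlt v i p j)
            + (∑ p ∈ Finset.Ico 1 i, dlt v p i j)
            + ∑ p ∈ Finset.Ioc j n, dlt v i j p) ∧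
      (∃ r : ℤ, 1 ≤ r ∧ r ≤ (n : ℤ) - 1 ∧
        winF n v j - winF n v i = (n : ℤ) * v i j + r) ∧
      Int.fdiv (winF n v j - winF n v i) (n : ℤ) = v i j ∧
      winF n v i < winF n v j := by
  obtain ⟨hnn, _hz, hcmp⟩ := hv
  intro i j hi hij hjn
  -- cardinalities
  have c1 : ((Finset.Ioo i j).card : ℤ) = (j : ℤ) - i - 1 := by
    rw [Nat.card_Ioo]; omega
  have c2 : ((Finset.Ico 1 i).card : ℤ) = (i : ℤ) - 1 := by
    rw [Nat.card_Ico]; omega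
  have c3 : ((Finset.Ioc j n).card : ℤ) = (n : ℤ) - j := by
    rw [Nat.card_Ioc]; omega
  -- expansions of the delta sums
  have eA : (∑ p ∈ Finset.Ioo i j, dlt v i p j)
      = ((j : ℤ) - i - 1) * v i j - (∑ p ∈ Finset.Ioo i j, v i p)
        - (∑ p ∈ Finset.Ioo i j, v p j) := by
    simp only [dlt, Finset.sum_sub_distrib, Finset.sum_const, nsmul_eq_mul, c1]
  have eB : (∑ p ∈ Finset.Ico 1 i, dlt v p i j)
      = (∑ p ∈ Finset.Ico 1 i, v p j) - (∑ p ∈ Finset.Ico 1 i, v p i)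
        - ((i : ℤ) - 1) * v i j := by
    simp only [dlt, Finset.sum_sub_distrib, Finset.sum_const, nsmul_eq_mul, c2]
  have eC : (∑ p ∈ Finset.Ioc j n, dlt v i j p)
      = (∑ p ∈ Finset.Ioc j n, v i p) - ((n : ℤ) - j) * v i j
        - (∑ p ∈ Finset.Ioc j n, v j p) := by
    simp only [dlt, Finset.sum_sub_distrib, Finset.sum_const, nsmul_eq_mul, c3]
  -- splitting the winF sums
  have h1 : ∑ p ∈ Finset.Ico 1 j, v p j
      = (∑ p ∈ Finset.Ico 1 i, v p j) + (v i j + ∑ p ∈ Finset.Ioo i j, v p j) := by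
    rw [← Finset.sum_Ico_consecutive _ hi hij.le, ← Finset.Ioo_insert_left hij,
      Finset.sum_insert Finset.left_notMem_Ioo]
  have h2 : ∑ p ∈ Finset.Ioc i n, v i p
      = ((∑ p ∈ Finset.Ioo i j, v i p) + v i j) + ∑ p ∈ Finset.Ioc j n, v i p := by
    rw [← Finset.sum_Ioc_consecutive _ hij.le hjn, ← Finset.Ioo_insert_right hij,
      Finset.sum_insert Finset.right_notMem_Ioo, add_comm (v i j)]
  have main : winF n v j - winF n v i
      = (j : ℤ) - (i : ℤ) + (n : ℤ) * v i j
        - (∑ p ∈ Finset.Ioo i j, dlt v i p j)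
        + (∑ p ∈ Finset.Ico 1 i, dlt v p i j)
        + ∑ p ∈ Finset.Ioc j n, dlt v i j p := by
    rw [eA, eB, eC]
    simp only [winF, h1, h2]
    ring
  refine ⟨main, ?_⟩
  -- bounds on the delta sums
  have hA0 : (0 : ℤ) ≤ ∑ p ∈ Finset.Ioo i j, dlt v i p j := by
    refine Finset.sum_nonneg fun p hp => ?_
    rw [Finset.mem_Ioo] at hp
    have := (hcmp i p j hi hp.1 hp.2 hjn).1
    simp only [dlt]; linarith
  have hA1 : (∑ p ∈ Finset.Ioo i j, dlt v i p j) ≤ (j : ℤ) - i - 1 := by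
    calc (∑ p ∈ Finset.Ioo i j, dlt v i p j) ≤ (Finset.Ioo i j).card • (1 : ℤ) := by
          refine Finset.sum_le_card_nsmul _ _ _ fun p hp => ?_
          rw [Finset.mem_Ioo] at hp
          have := (hcmp i p j hi hp.1 hp.2 hjn).2
          simp only [dlt]; linarith
      _ = (j : ℤ) - i - 1 := by rw [nsmul_eq_mul, mul_one, c1]
  have hB0 : (0 : ℤ) ≤ ∑ p ∈ Finset.Ico 1 i, dlt v p i j := by
    refine Finset.sum_nonneg fun p hp => ?_
    rw [Finset.mem_Ico] at hp
    have := (hcmp p i j hp.1 hp.2 hij hjn).1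
    simp only [dlt]; linarith
  have hB1 : (∑ p ∈ Finset.Ico 1 i, dlt v p i j) ≤ (i : ℤ) - 1 := by
    calc (∑ p ∈ Finset.Ico 1 i, dlt v p i j) ≤ (Finset.Ico 1 i).card • (1 : ℤ) := by
          refine Finset.sum_le_card_nsmul _ _ _ fun p hp => ?_
          rw [Finset.mem_Ico] at hp
          have := (hcmp p i j hp.1 hp.2 hij hjn).2
          simp only [dlt]; linarith
      _ = (i : ℤ) - 1 := by rw [nsmul_eq_mul, mul_one, c2]
  have hC0 : (0 : ℤ) ≤ ∑ p ∈ Finset.Ioc j n, dlt v i j p := by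
    refine Finset.sum_nonneg fun p hp => ?_
    rw [Finset.mem_Ioc] at hp
    have := (hcmp i j p hi hij hp.1 hp.2).1
    simp only [dlt]; linarith
  have hC1 : (∑ p ∈ Finset.Ioc j n, dlt v i j p) ≤ (n : ℤ) - j := by
    calc (∑ p ∈ Finset.Ioc j n, dlt v i j p) ≤ (Finset.Ioc j n).card • (1 : ℤ) := by
          refine Finset.sum_le_card_nsmul _ _ _ fun p hp => ?_
          rw [Finset.mem_Ioc] at hp
          have := (hcmp i j p hi hij hp.1 hp.2).2
          simp only [dlt]; linarith
      _ = (n : ℤ) - j := by rw [nsmul_eq_mul, mul_one, c3]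
  set r : ℤ := (j : ℤ) - (i : ℤ)
      - (∑ p ∈ Finset.Ioo i j, dlt v i p j)
      + (∑ p ∈ Finset.Ico 1 i, dlt v p i j)
      + ∑ p ∈ Finset.Ioc j n, dlt v i j p with hr
  have hij' : (i : ℤ) < j := by exact_mod_cast hij
  have hjn' : (j : ℤ) ≤ n := by exact_mod_cast hjn
  have hi' : (1 : ℤ) ≤ i := by exact_mod_cast hi
  have hmain' : winF n v j - winF n v i = (n : ℤ) * v i j + r := by
    rw [main, hr]; ring
  have hr1 : 1 ≤ r := by rw [hr]; linarith
  have hr2 : r ≤ (n : ℤ) - 1 := by rw [hr]; linarith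
  refine ⟨⟨r, hr1, hr2, hmain'⟩, ?_, ?_⟩
  · rw [hmain', Int.fdiv_eq_ediv_of_nonneg _ (by positivity)]
    rw [add_comm, Int.add_mul_ediv_left _ _ (by omega : (n : ℤ) ≠ 0),
      Int.ediv_eq_zero_of_lt (by linarith) (by linarith), zero_add]
  · have hv0 : 0 ≤ v i j := hnn i j hi hij hjn
    have : 0 < (n : ℤ) * v i j + r := by positivity
    linarith [hmain']
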